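/- Consider the Q-REPS optimization problem: maximize ⟨p,r⟩ − (1/η)·D(p‖p₀) − (1/α)·H(d‖d₀) over probability distributions p, d on 𝒳×𝒜 subject to Σ_a d(x,a) = γ·Σ_{x',a'} P(x|x',a')·p(x',a') + (1−γ)·ν₀(x) for all x ∈ 𝒳, and Σ_{x,a} d(x,a)·φ(x,a) = Σ_{x,a} p(x,a)·φ(x,a). Then an optimal solution (p*, d*) is given by p*(x,a) = p₀(x,a)·e^{η·Δ_{θ*}(x,a)} / (Σ_{x',a'} p₀(x',a')·e^{η·Δ_{θ*}(x',a')}) and d*(x,a) = ω(x)·π₀(a|x)·e^{α·(Q_{θ*}(x,a) − V_{θ*}(x))}, where ω(x) = γ·Σ_{x',a'} P(x|x',a')·p*(x',a') + (1−γ)·ν₀(x) and θ* is any minimizer of the convex function G(θ) = (1/η)·log(Σ_{x,a} p₀(x,a)·e^{η·Δ_θ(x,a)}) + (1−γ)·Σ_x ν₀(x)·V_θ(x). -/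

import Mathlib

lemma gibbs_ineq {ι : Type*} [Fintype ι] (p μ f : ι → ℝ)
    (hp : ∀ i, 0 ≤ p i) (hp1 : ∑ i, p i = 1)
    (hμ : ∀ i, 0 < μ i) :
    ∑ i, (p i * f i - p i * Real.log (p i / μ i)) ≤
      Real.log (∑ i, μ i * Real.exp (f i)) := by
  have hne : Nonempty ι := by
    by_contra h
    rw [not_nonempty_iff] at h
    simp [Finset.univ_eq_empty] at hp1
  set Z : ℝ := ∑ i, μ i * Real.exp (f i) with hZ
  have hZpos : 0 < Z := by
    apply Finset.sum_pos (fun i _ => mul_pos (hμ i) (Real.exp_pos _))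
    exact Finset.univ_nonempty
  have hterm : ∀ i, p i * f i - p i * Real.log (p i / μ i)
      ≤ p i * Real.log Z + μ i * Real.exp (f i) / Z - p i := by
    intro i
    rcases eq_or_lt_of_le (hp i) with h0 | hpi
    · rw [← h0]
      simp only [zero_mul, sub_zero, zero_add, mul_zero]
      have : 0 ≤ μ i * Real.exp (f i) / Z :=
        div_nonneg (le_of_lt (mul_pos (hμ i) (Real.exp_pos _))) hZpos.le
      linarith
    · have hti : 0 < μ i * Real.exp (f i) / p i :=
        div_pos (mul_pos (hμ i) (Real.exp_pos _)) hpi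
      have hlog : Real.log (μ i * Real.exp (f i) / p i) ≤
          Real.log Z + (μ i * Real.exp (f i) / p i) / Z - 1 := by
        have h1 : Real.log (μ i * Real.exp (f i) / p i / Z) ≤
            μ i * Real.exp (f i) / p i / Z - 1 :=
          Real.log_le_sub_one_of_pos (div_pos hti hZpos)
        rw [Real.log_div (ne_of_gt hti) (ne_of_gt hZpos)] at h1
        linarith
      have heq : p i * f i - p i * Real.log (p i / μ i)
          = p i * Real.log (μ i * Real.exp (f i) / p i) := by
        rw [Real.log_div (ne_of_gt (mul_pos (hμ i) (Real.exp_pos _))) (ne_of_gt hpi),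
          Real.log_mul (ne_of_gt (hμ i)) (Real.exp_ne_zero _), Real.log_exp,
          Real.log_div (ne_of_gt hpi) (ne_of_gt (hμ i))]
        ring
      rw [heq]
      calc p i * Real.log (μ i * Real.exp (f i) / p i)
          ≤ p i * (Real.log Z + (μ i * Real.exp (f i) / p i) / Z - 1) :=
            mul_le_mul_of_nonneg_left hlog (hp i)
        _ = p i * Real.log Z + μ i * Real.exp (f i) / Z - p i := by
            field_simp
  calc ∑ i, (p i * f i - p i * Real.log (p i / μ i))
      ≤ ∑ i, (p i * Real.log Z + μ i * Real.exp (f i) / Z - p i) :=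
        Finset.sum_le_sum (fun i _ => hterm i)
    _ = Real.log Z := by
        rw [Finset.sum_sub_distrib, Finset.sum_add_distrib, ← Finset.sum_mul,
          ← Finset.sum_div, hp1]
        field_simp
        rw [← hZ]; ring

lemma gibbs_scaled {ι : Type*} [Fintype ι] (d μ f : ι → ℝ)
    (hd : ∀ i, 0 ≤ d i) (hμ : ∀ i, 0 < μ i) :
    ∑ i, (d i * f i - d i * Real.log ((d i / ∑ j, d j) / μ i)) ≤
      (∑ j, d j) * Real.log (∑ i, μ i * Real.exp (f i)) := by
  set s : ℝ := ∑ j, d j with hs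
  rcases eq_or_lt_of_le (Finset.sum_nonneg (fun i _ => hd i) : (0:ℝ) ≤ s) with h0 | hspos
  · have hall : ∀ i, d i = 0 := by
      intro i
      have := (Finset.sum_eq_zero_iff_of_nonneg (fun i _ => hd i)).mp h0.symm
      exact this i (Finset.mem_univ i)
    simp only [hall, zero_mul, sub_zero, zero_sub, neg_zero, Finset.sum_const_zero]
    rw [hs, Finset.sum_eq_zero (fun i _ => hall i), zero_mul]
  · have := gibbs_ineq (fun i => d i / s) μ f (fun i => div_nonneg (hd i) hspos.le)
      (by rw [← Finset.sum_div]; exact div_self hspos.ne') hμ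
    have h2 := mul_le_mul_of_nonneg_left this hspos.le
    calc ∑ i, (d i * f i - d i * Real.log ((d i / s) / μ i))
        = s * ∑ i, (d i / s * f i - d i / s * Real.log (d i / s / μ i)) := by
          rw [Finset.mul_sum]
          apply Finset.sum_congr rfl
          intro i _
          field_simp [show s ≠ 0 from hspos.ne']
      _ ≤ s * Real.log (∑ i, μ i * Real.exp (f i)) := h2


/-- Characterization of an optimal solution of the Q-REPS primal
optimization problem. With θ* a minimizer of the logistic Bellman error G, the pair
(p*, d*) with p*(x,a) ∝ p₀(x,a)·e^{η·Δ_{θ*}(x,a)} and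
d*(x,a) = ω(x)·π₀(a|x)·e^{α·(Q_{θ*}(x,a) − V_{θ*}(x))}, where
ω(x) = γ·Σ_{x',a'} P(x|x',a')·p*(x',a') + (1−γ)·ν₀(x), is feasible and maximizes
⟨p,r⟩ − (1/η)·D(p‖p₀) − (1/α)·H(d‖d₀) over all feasible pairs of probability
distributions. -/
theorem stmt0 {X A : Type*} [Fintype X] [Fintype A] [Nonempty X] [Nonempty A]
    {m : ℕ} (P : X → A → X → ℝ) (r : X → A → ℝ) (γ : ℝ) (ν₀ : X → ℝ)
    (φ : X → A → Fin m → ℝ) (α η : ℝ)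
    (p₀ d₀ : X → A → ℝ) (π₀ : X → A → ℝ)
    (hP0 : ∀ x a x', 0 ≤ P x a x') (hP1 : ∀ x a, ∑ x', P x a x' = 1)
    (hr : ∀ x a, 0 ≤ r x a ∧ r x a ≤ 1)
    (hγ0 : 0 < γ) (hγ1 : γ < 1)
    (hν₀0 : ∀ x, 0 ≤ ν₀ x) (hν₀1 : ∑ x, ν₀ x = 1)
    (hα : 0 < α) (hη : 0 < η)
    (hp₀pos : ∀ x a, 0 < p₀ x a) (hp₀1 : ∑ x, ∑ a, p₀ x a = 1)
    (hd₀pos : ∀ x a, 0 < d₀ x a) (hd₀1 : ∑ x, ∑ a, d₀ x a = 1)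
    (hπ₀ : ∀ x a, π₀ x a = d₀ x a / ∑ a', d₀ x a')
    -- the Q-function, value function, Bellman error and logistic Bellman error
    (Q : (Fin m → ℝ) → X → A → ℝ)
    (hQ : ∀ θ x a, Q θ x a = ∑ i, θ i * φ x a i)
    (V : (Fin m → ℝ) → X → ℝ)
    (hV : ∀ θ x, V θ x = (1 / α) * Real.log (∑ a, π₀ x a * Real.exp (α * Q θ x a)))
    (Δ : (Fin m → ℝ) → X → A → ℝ)
    (hΔ : ∀ θ x a, Δ θ x a = r x a + γ * (∑ x', P x a x' * V θ x') - Q θ x a)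
    (G : (Fin m → ℝ) → ℝ)
    (hG : ∀ θ, G θ = (1 / η) * Real.log (∑ x, ∑ a, p₀ x a * Real.exp (η * Δ θ x a))
        + (1 - γ) * ∑ x, ν₀ x * V θ x)
    -- the objective and the feasible set
    (D : (X → A → ℝ) → (X → A → ℝ) → ℝ)
    (hD : ∀ p p', D p p' =
      ∑ x, ∑ a, (p x a * Real.log (p x a / p' x a) - p x a + p' x a))
    (Hc : (X → A → ℝ) → (X → A → ℝ) → ℝ)
    (hHc : ∀ d d', Hc d d' = ∑ x, ∑ a,
      d x a * Real.log ((d x a / ∑ a', d x a') / (d' x a / ∑ a', d' x a')))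
    (J : (X → A → ℝ) → (X → A → ℝ) → ℝ)
    (hJ : ∀ p d, J p d =
      (∑ x, ∑ a, p x a * r x a) - (1 / η) * D p p₀ - (1 / α) * Hc d d₀)
    (Feas : (X → A → ℝ) → (X → A → ℝ) → Prop)
    (hFeas : ∀ p d, Feas p d ↔
      ((∀ x a, 0 ≤ p x a) ∧ (∑ x, ∑ a, p x a) = 1 ∧
       (∀ x a, 0 ≤ d x a) ∧ (∑ x, ∑ a, d x a) = 1 ∧
       (∀ x, ∑ a, d x a =
          γ * (∑ x', ∑ a', P x' a' x * p x' a') + (1 - γ) * ν₀ x) ∧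
       (∀ i, (∑ x, ∑ a, d x a * φ x a i) = ∑ x, ∑ a, p x a * φ x a i)))
    -- the proposed optimal solution
    (θs : Fin m → ℝ) (hθs : ∀ θ, G θs ≤ G θ)
    (ps ds : X → A → ℝ) (ω : X → ℝ)
    (hps : ∀ x a, ps x a = p₀ x a * Real.exp (η * Δ θs x a)
        / ∑ x', ∑ a', p₀ x' a' * Real.exp (η * Δ θs x' a'))
    (hω : ∀ x, ω x = γ * (∑ x', ∑ a', P x' a' x * ps x' a') + (1 - γ) * ν₀ x)
    (hds : ∀ x a, ds x a = ω x * (π₀ x a * Real.exp (α * (Q θs x a - V θs x)))) :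
    Feas ps ds ∧ ∀ p d, Feas p d → J p d ≤ J ps ds := by
  have hα' : α ≠ 0 := ne_of_gt hα
  have hη' : η ≠ 0 := ne_of_gt hη
  -- π₀ is a positive probability kernel
  have hd₀sumpos : ∀ x, 0 < ∑ a', d₀ x a' :=
    fun x => Finset.sum_pos (fun a _ => hd₀pos x a) Finset.univ_nonempty
  have hπ₀pos : ∀ x a, 0 < π₀ x a := by
    intro x a; rw [hπ₀]; exact div_pos (hd₀pos x a) (hd₀sumpos x)
  have hπ₀sum : ∀ x, ∑ a, π₀ x a = 1 := by
    intro x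
    simp only [hπ₀]
    rw [← Finset.sum_div, div_self (ne_of_gt (hd₀sumpos x))]
  -- normalization constant
  set Z : ℝ := ∑ x, ∑ a, p₀ x a * Real.exp (η * Δ θs x a) with hZdef
  have hZpos : 0 < Z := by
    apply Finset.sum_pos (fun x _ => ?_) Finset.univ_nonempty
    exact Finset.sum_pos (fun a _ => mul_pos (hp₀pos x a) (Real.exp_pos _))
      Finset.univ_nonempty
  have hpspos : ∀ x a, 0 < ps x a := by
    intro x a; rw [hps]
    exact div_pos (mul_pos (hp₀pos x a) (Real.exp_pos _)) hZpos
  have hps1 : ∑ x, ∑ a, ps x a = 1 := by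
    have : ∀ x, ∑ a, ps x a = (∑ a, p₀ x a * Real.exp (η * Δ θs x a)) / Z := by
      intro x
      rw [Finset.sum_div]
      exact Finset.sum_congr rfl fun a _ => hps x a
    simp only [this]
    rw [← Finset.sum_div, ← hZdef, div_self (ne_of_gt hZpos)]
  -- exp of α·V is the partition function
  have hexpV : ∀ x, Real.exp (α * V θs x) = ∑ a, π₀ x a * Real.exp (α * Q θs x a) := by
    intro x
    have hpos : 0 < ∑ a, π₀ x a * Real.exp (α * Q θs x a) :=
      Finset.sum_pos (fun a _ => mul_pos (hπ₀pos x a) (Real.exp_pos _))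
        Finset.univ_nonempty
    rw [hV]
    rw [show α * (1 / α * Real.log (∑ a, π₀ x a * Real.exp (α * Q θs x a)))
        = Real.log (∑ a, π₀ x a * Real.exp (α * Q θs x a)) by field_simp]
    exact Real.exp_log hpos
  have hsum_exp : ∀ x, ∑ a, π₀ x a * Real.exp (α * (Q θs x a - V θs x)) = 1 := by
    intro x
    have : ∀ a, π₀ x a * Real.exp (α * (Q θs x a - V θs x))
        = π₀ x a * Real.exp (α * Q θs x a) / Real.exp (α * V θs x) := by
      intro a
      rw [mul_sub, Real.exp_sub]
      ring
    simp only [this]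
    rw [← Finset.sum_div, ← hexpV x]
    field_simp
  have hdsum : ∀ x, ∑ a, ds x a = ω x := by
    intro x
    simp only [hds]
    rw [← Finset.mul_sum, hsum_exp x, mul_one]
  have hωnn : ∀ x, 0 ≤ ω x := by
    intro x
    rw [hω]
    have h1 : 0 ≤ ∑ x', ∑ a', P x' a' x * ps x' a' :=
      Finset.sum_nonneg fun x' _ => Finset.sum_nonneg fun a' _ =>
        mul_nonneg (hP0 x' a' x) (hpspos x' a').le
    nlinarith [hν₀0 x]
  have hdsnn : ∀ x a, 0 ≤ ds x a := by
    intro x a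
    rw [hds]
    exact mul_nonneg (hωnn x) (mul_pos (hπ₀pos x a) (Real.exp_pos _)).le
  -- a generic index swap
  have hswap : ∀ (q : X → A → ℝ) (v : X → ℝ),
      ∑ x, ∑ a, q x a * (∑ x', P x a x' * v x')
        = ∑ x', (∑ x, ∑ a, P x a x' * q x a) * v x' := by
    intro q v
    calc ∑ x, ∑ a, q x a * (∑ x', P x a x' * v x')
        = ∑ x, ∑ x', ∑ a, q x a * (P x a x' * v x') := by
          apply Finset.sum_congr rfl; intro x _
          rw [Finset.sum_comm]
          apply Finset.sum_congr rfl; intro a _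
          rw [Finset.mul_sum]
      _ = ∑ x', ∑ x, ∑ a, q x a * (P x a x' * v x') := Finset.sum_comm
      _ = ∑ x', (∑ x, ∑ a, P x a x' * q x a) * v x' := by
          apply Finset.sum_congr rfl; intro x' _
          rw [Finset.sum_mul]
          apply Finset.sum_congr rfl; intro x _
          rw [Finset.sum_mul]
          apply Finset.sum_congr rfl; intro a _
          ring
  have hQsum : ∀ q : X → A → ℝ,
      ∑ x, ∑ a, q x a * Q θs x a = ∑ i, θs i * ∑ x, ∑ a, q x a * φ x a i := by
    intro q
    calc ∑ x, ∑ a, q x a * Q θs x a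
        = ∑ x, ∑ i, ∑ a, q x a * (θs i * φ x a i) := by
          apply Finset.sum_congr rfl; intro x _
          rw [Finset.sum_comm]
          apply Finset.sum_congr rfl; intro a _
          rw [hQ, Finset.mul_sum]
      _ = ∑ i, ∑ x, ∑ a, q x a * (θs i * φ x a i) := Finset.sum_comm
      _ = ∑ i, θs i * ∑ x, ∑ a, q x a * φ x a i := by
          apply Finset.sum_congr rfl; intro i _
          rw [Finset.mul_sum]
          apply Finset.sum_congr rfl; intro x _
          rw [Finset.mul_sum]
          apply Finset.sum_congr rfl; intro a _
          ring
  -- gradient of G is zero at θs: feature matching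
  have hkey : ∀ i, (∑ x, ∑ a, ds x a * φ x a i) = ∑ x, ∑ a, ps x a * φ x a i := by
    intro i
    -- perturbation of θs in direction i
    set e : ℝ → Fin m → ℝ := fun t j => θs j + t * (if j = i then 1 else 0) with he
    have he0 : e 0 = θs := by
      funext j
      simp [he]
    have hQe : ∀ t x a, Q (e t) x a = Q θs x a + t * φ x a i := by
      intro t x a
      rw [hQ, hQ]
      have h1 : ∀ j, e t j * φ x a j
          = θs j * φ x a j + t * ((if j = i then φ x a j else 0)) := by
        intro j
        simp only [he]
        by_cases hj : j = i <;> simp [hj] <;> ring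
      simp only [h1]
      rw [Finset.sum_add_distrib, ← Finset.mul_sum, Finset.sum_ite_eq' Finset.univ i]
      simp
    -- the perturbed value function and its derivative
    set vf : X → ℝ → ℝ := fun x t =>
      (1 / α) * Real.log (∑ a, π₀ x a * Real.exp (α * (Q θs x a + t * φ x a i))) with hvf
    set Vd : X → ℝ := fun x =>
      ∑ a, π₀ x a * φ x a i * Real.exp (α * (Q θs x a - V θs x)) with hVd
    have hv0 : ∀ x, vf x 0 = V θs x := by
      intro x
      simp only [hvf, zero_mul, add_zero]
      rw [hV]
    have hve : ∀ t x, V (e t) x = vf x t := by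
      intro t x
      rw [hV]
      simp only [hvf, hQe]
    have hS0pos : ∀ x, 0 < ∑ a, π₀ x a * Real.exp (α * (Q θs x a + 0 * φ x a i)) := by
      intro x
      exact Finset.sum_pos (fun a _ => mul_pos (hπ₀pos x a) (Real.exp_pos _))
        Finset.univ_nonempty
    have hv : ∀ x, HasDerivAt (vf x) (Vd x) 0 := by
      intro x
      have hterm : ∀ a : A, HasDerivAt
          (fun t : ℝ => π₀ x a * Real.exp (α * (Q θs x a + t * φ x a i)))
          (π₀ x a * (Real.exp (α * (Q θs x a + 0 * φ x a i)) * (α * φ x a i))) 0 := by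
        intro a
        have h1 : HasDerivAt (fun t : ℝ => Q θs x a + t * φ x a i) (φ x a i) 0 :=
          (hasDerivAt_mul_const (φ x a i)).const_add (Q θs x a)
        exact ((h1.const_mul α).exp).const_mul (π₀ x a)
      have hsum := HasDerivAt.fun_sum (fun a (_ : a ∈ Finset.univ) => hterm a)
      have hlog := hsum.log (ne_of_gt (hS0pos x))
      have hfin := hlog.const_mul (1 / α)
      have hval : (1 / α) * ((∑ a, π₀ x a * (Real.exp (α * (Q θs x a + 0 * φ x a i))
          * (α * φ x a i))) / (∑ a, π₀ x a * Real.exp (α * (Q θs x a + 0 * φ x a i))))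
          = Vd x := by
        simp only [zero_mul, add_zero]
        rw [← hexpV x, hVd]
        rw [Finset.sum_div, Finset.mul_sum]
        apply Finset.sum_congr rfl; intro a _
        rw [mul_sub, Real.exp_sub]
        field_simp
      rw [hval] at hfin
      exact hfin
    -- the perturbed objective
    have hg0 : ∀ x a, η * (r x a + γ * (∑ x', P x a x' * vf x' 0)
        - (Q θs x a + 0 * φ x a i)) = η * Δ θs x a := by
      intro x a
      simp only [hv0, zero_mul, add_zero]
      rw [hΔ]
    have hterm2 : ∀ x a, HasDerivAt
        (fun t => p₀ x a * Real.exp (η * (r x a + γ * (∑ x', P x a x' * vf x' t)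
          - (Q θs x a + t * φ x a i))))
        (p₀ x a * (Real.exp (η * Δ θs x a)
          * (η * (γ * (∑ x', P x a x' * Vd x') - φ x a i)))) 0 := by
      intro x a
      have hsum' : HasDerivAt (fun t => ∑ x', P x a x' * vf x' t)
          (∑ x', P x a x' * Vd x') 0 :=
        HasDerivAt.fun_sum (fun x' _ => (hv x').const_mul (P x a x'))
      have hlin : HasDerivAt (fun t : ℝ => Q θs x a + t * φ x a i) (φ x a i) 0 :=
        (hasDerivAt_mul_const (φ x a i)).const_add (Q θs x a)
      have h3 : HasDerivAt (fun t => r x a + γ * (∑ x', P x a x' * vf x' t)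
          - (Q θs x a + t * φ x a i))
          (γ * (∑ x', P x a x' * Vd x') - φ x a i) 0 :=
        ((hsum'.const_mul γ).const_add (r x a)).sub hlin
      have h4 := ((h3.const_mul η).exp).const_mul (p₀ x a)
      have h5 : Real.exp (η * Δ θs x a) = Real.exp (η * (r x a
          + γ * (∑ x', P x a x' * vf x' 0) - (Q θs x a + 0 * φ x a i))) := by
        rw [hg0]
      rw [h5]
      exact h4
    have hT := HasDerivAt.fun_sum (fun x (_ : x ∈ Finset.univ) =>
      HasDerivAt.fun_sum (fun a (_ : a ∈ Finset.univ) => hterm2 x a))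
    have hT0 : ∑ x, ∑ a, p₀ x a * Real.exp (η * (r x a
        + γ * (∑ x', P x a x' * vf x' 0) - (Q θs x a + 0 * φ x a i))) = Z := by
      simp only [hg0]
      exact hZdef.symm
    have hlogT := hT.log (by rw [hT0]; exact ne_of_gt hZpos)
    have hF1 := hlogT.const_mul (1 / η)
    have hF2 := (HasDerivAt.fun_sum (fun x (_ : x ∈ Finset.univ) =>
      (hv x).const_mul (ν₀ x))).const_mul (1 - γ)
    have hF := hF1.add hF2
    rw [hT0] at hF
    -- the function being differentiated is G ∘ e
    have hGe : ∀ t, G (e t) = (1 / η) * Real.log (∑ x, ∑ a, p₀ x a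
        * Real.exp (η * (r x a + γ * (∑ x', P x a x' * vf x' t)
          - (Q θs x a + t * φ x a i))))
        + (1 - γ) * ∑ x, ν₀ x * vf x t := by
      intro t
      rw [hG]
      simp only [hΔ, hve, hQe]
    have hmin : IsLocalMin (fun t => (1 / η) * Real.log (∑ x, ∑ a, p₀ x a
        * Real.exp (η * (r x a + γ * (∑ x', P x a x' * vf x' t)
          - (Q θs x a + t * φ x a i))))
        + (1 - γ) * ∑ x, ν₀ x * vf x t) 0 := by
      have hle : ∀ t : ℝ, G (e 0) ≤ G (e t) := by
        intro t
        rw [he0]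
        exact hθs (e t)
      apply Filter.Eventually.of_forall
      intro t
      have h1 := hle t
      rw [hGe t, hGe 0] at h1
      simpa using h1
    have hc0 := hmin.hasDerivAt_eq_zero hF
    -- interpret the vanishing derivative
    have hEq1 : (1 / η) * ((∑ x, ∑ a, p₀ x a * (Real.exp (η * Δ θs x a)
        * (η * (γ * (∑ x', P x a x' * Vd x') - φ x a i)))) / Z)
        = γ * (∑ x, ∑ a, ps x a * (∑ x', P x a x' * Vd x'))
          - ∑ x, ∑ a, ps x a * φ x a i := by
      calc (1 / η) * ((∑ x, ∑ a, p₀ x a * (Real.exp (η * Δ θs x a)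
            * (η * (γ * (∑ x', P x a x' * Vd x') - φ x a i)))) / Z)
          = ∑ x, ∑ a, ps x a * (γ * (∑ x', P x a x' * Vd x') - φ x a i) := by
            rw [Finset.sum_div, Finset.mul_sum]
            apply Finset.sum_congr rfl; intro x _
            rw [Finset.sum_div, Finset.mul_sum]
            apply Finset.sum_congr rfl; intro a _
            rw [hps]
            field_simp
        _ = γ * (∑ x, ∑ a, ps x a * (∑ x', P x a x' * Vd x'))
              - ∑ x, ∑ a, ps x a * φ x a i := by
            rw [Finset.mul_sum, ← Finset.sum_sub_distrib]
            apply Finset.sum_congr rfl; intro x _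
            rw [Finset.mul_sum, ← Finset.sum_sub_distrib]
            apply Finset.sum_congr rfl; intro a _
            ring
    rw [hEq1] at hc0
    have hEq2 : γ * (∑ x, ∑ a, ps x a * (∑ x', P x a x' * Vd x'))
        + (1 - γ) * ∑ x, ν₀ x * Vd x = ∑ x, ∑ a, ds x a * φ x a i := by
      rw [hswap ps Vd]
      have h6 : ∀ x, ∑ a, ds x a * φ x a i = ω x * Vd x := by
        intro x
        rw [hVd, Finset.mul_sum]
        apply Finset.sum_congr rfl; intro a _
        rw [hds]
        ring
      have h7 : ∑ x, ∑ a, ds x a * φ x a i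
          = γ * (∑ x', (∑ x, ∑ a, P x a x' * ps x a) * Vd x')
            + (1 - γ) * ∑ x, ν₀ x * Vd x := by
        calc ∑ x, ∑ a, ds x a * φ x a i
            = ∑ x, (γ * ((∑ x', ∑ a', P x' a' x * ps x' a') * Vd x)
                + (1 - γ) * (ν₀ x * Vd x)) := by
              apply Finset.sum_congr rfl; intro x _
              rw [h6, hω]
              ring
          _ = γ * (∑ x, (∑ x', ∑ a', P x' a' x * ps x' a') * Vd x)
                + (1 - γ) * ∑ x, ν₀ x * Vd x := by
              rw [Finset.sum_add_distrib, ← Finset.mul_sum, ← Finset.mul_sum]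
      rw [h7]
    linarith [hEq2, hc0]
  -- feasibility
  have hds1 : ∑ x, ∑ a, ds x a = 1 := by
    have : ∀ x, ∑ a, ds x a = ω x := hdsum
    simp only [this, hω]
    rw [Finset.sum_add_distrib, ← Finset.mul_sum, ← Finset.mul_sum, hν₀1,
      Finset.sum_comm]
    have : ∑ x', ∑ x, ∑ a', P x' a' x * ps x' a'
        = ∑ x', ∑ a', ps x' a' := by
      apply Finset.sum_congr rfl
      intro x' _
      rw [Finset.sum_comm]
      apply Finset.sum_congr rfl
      intro a' _
      rw [← Finset.sum_mul, hP1, one_mul]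
    rw [this, hps1]
    ring
  have hfeas : Feas ps ds := by
    rw [hFeas]
    exact ⟨fun x a => (hpspos x a).le, hps1, hdsnn, hds1,
      fun x => by rw [hdsum, hω], hkey⟩
  -- value of the objective at the candidate
  have hDps : D ps p₀ = η * (∑ x, ∑ a, ps x a * Δ θs x a) - Real.log Z := by
    rw [hD]
    have hterm : ∀ x a, ps x a * Real.log (ps x a / p₀ x a) - ps x a + p₀ x a
        = η * (ps x a * Δ θs x a) - ps x a * Real.log Z - ps x a + p₀ x a := by
      intro x a
      have h1 : ps x a / p₀ x a = Real.exp (η * Δ θs x a) / Z := by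
        rw [hps]
        field_simp [(hp₀pos x a).ne', hZpos.ne']
      rw [h1, Real.log_div (Real.exp_ne_zero _) (ne_of_gt hZpos), Real.log_exp]
      ring
    simp only [hterm]
    simp only [Finset.sum_add_distrib, Finset.sum_sub_distrib, ← Finset.mul_sum,
      ← Finset.sum_mul]
    rw [hps1, hp₀1]
    ring
  have hHds : Hc ds d₀ = α * ∑ x, ∑ a, ds x a * (Q θs x a - V θs x) := by
    rw [hHc]
    have hterm : ∀ x a, ds x a *
        Real.log ((ds x a / ∑ a', ds x a') / (d₀ x a / ∑ a', d₀ x a'))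
        = α * (ds x a * (Q θs x a - V θs x)) := by
      intro x a
      rw [hdsum x, ← hπ₀ x a]
      rcases eq_or_lt_of_le (hωnn x) with h0 | hω0
      · have hds0 : ds x a = 0 := by rw [hds, ← h0, zero_mul]
        simp [hds0]
      · have h2 : ds x a / ω x / π₀ x a = Real.exp (α * (Q θs x a - V θs x)) := by
          rw [hds]
          field_simp
          exact div_self (hπ₀pos x a).ne'
        rw [h2, Real.log_exp]
        ring
    simp only [hterm, ← Finset.mul_sum]
  have hJeq : J ps ds = G θs := by
    have h1 : ∀ x a, ps x a * r x a = ps x a * Δ θs x a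
        - γ * (ps x a * (∑ x', P x a x' * V θs x')) + ps x a * Q θs x a := by
      intro x a
      rw [hΔ]
      ring
    have hr_split : ∑ x, ∑ a, ps x a * r x a
        = (∑ x, ∑ a, ps x a * Δ θs x a)
          - γ * (∑ x, ∑ a, ps x a * (∑ x', P x a x' * V θs x'))
          + ∑ x, ∑ a, ps x a * Q θs x a := by
      simp only [h1, Finset.sum_add_distrib, Finset.sum_sub_distrib, ← Finset.mul_sum]
    have hQeq : ∑ x, ∑ a, ps x a * Q θs x a = ∑ x, ∑ a, ds x a * Q θs x a := by
      rw [hQsum ps, hQsum ds]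
      exact Finset.sum_congr rfl fun i _ => by rw [hkey i]
    have hdsplit : ∑ x, ∑ a, ds x a * (Q θs x a - V θs x)
        = (∑ x, ∑ a, ds x a * Q θs x a) - ∑ x, (∑ a, ds x a) * V θs x := by
      rw [← Finset.sum_sub_distrib]
      apply Finset.sum_congr rfl; intro x _
      rw [Finset.sum_mul, ← Finset.sum_sub_distrib]
      apply Finset.sum_congr rfl; intro a _
      ring
    have hflowV : ∑ x, (∑ a, ds x a) * V θs x
        = γ * (∑ x', (∑ x, ∑ a, P x a x' * ps x a) * V θs x')
          + (1 - γ) * ∑ x, ν₀ x * V θs x := by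
      calc ∑ x, (∑ a, ds x a) * V θs x
          = ∑ x, (γ * ((∑ x', ∑ a', P x' a' x * ps x' a') * V θs x)
              + (1 - γ) * (ν₀ x * V θs x)) := by
            apply Finset.sum_congr rfl; intro x _
            rw [hdsum, hω]
            ring
        _ = γ * (∑ x, (∑ x', ∑ a', P x' a' x * ps x' a') * V θs x)
              + (1 - γ) * ∑ x, ν₀ x * V θs x := by
            rw [Finset.sum_add_distrib, ← Finset.mul_sum, ← Finset.mul_sum]
    rw [hJ, hDps, hHds, hr_split, hG, ← hZdef]
    rw [hQeq, hdsplit, hflowV, hswap ps (V θs)]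
    field_simp
    ring
  refine ⟨hfeas, fun p d hpd => ?_⟩
  rw [hJeq]
  rw [hFeas] at hpd
  obtain ⟨hp0, hp1, hd0, hd1, hflow, hfeat⟩ := hpd
  -- goal : J p d ≤ G θs
  have hDp : D p p₀ = ∑ x, ∑ a, p x a * Real.log (p x a / p₀ x a) := by
    rw [hD]
    simp only [Finset.sum_add_distrib, Finset.sum_sub_distrib]
    rw [hp1, hp₀1]
    ring
  have hA : (∑ x, ∑ a, p x a * Δ θs x a) - (1 / η) * D p p₀
      ≤ (1 / η) * Real.log Z := by
    have hp1' : ∑ q : X × A, p q.1 q.2 = 1 := by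
      rw [Fintype.sum_prod_type]; exact hp1
    have hg := gibbs_ineq (fun q : X × A => p q.1 q.2) (fun q => p₀ q.1 q.2)
      (fun q => η * Δ θs q.1 q.2) (fun q => hp0 q.1 q.2) hp1' (fun q => hp₀pos q.1 q.2)
    rw [Fintype.sum_prod_type, Fintype.sum_prod_type] at hg
    have hL : ∑ x, ∑ a, (p x a * (η * Δ θs x a) - p x a * Real.log (p x a / p₀ x a))
        = η * (∑ x, ∑ a, p x a * Δ θs x a) - D p p₀ := by
      rw [hDp]
      simp only [Finset.sum_sub_distrib]
      congr 1
      rw [Finset.mul_sum]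
      apply Finset.sum_congr rfl; intro x _
      rw [Finset.mul_sum]
      apply Finset.sum_congr rfl; intro a _
      ring
    rw [hL, ← hZdef] at hg
    have h2 := mul_le_mul_of_nonneg_left hg (le_of_lt (by positivity : (0:ℝ) < 1 / η))
    calc (∑ x, ∑ a, p x a * Δ θs x a) - (1 / η) * D p p₀
        = (1 / η) * (η * (∑ x, ∑ a, p x a * Δ θs x a) - D p p₀) := by
          field_simp
      _ ≤ (1 / η) * Real.log Z := h2
  have hαV : ∀ x, Real.log (∑ a, π₀ x a * Real.exp (α * Q θs x a)) = α * V θs x := by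
    intro x
    rw [hV]
    field_simp
  have hB : ∀ x, (∑ a, d x a * Q θs x a)
      - (1 / α) * (∑ a, d x a * Real.log ((d x a / ∑ a', d x a') / π₀ x a))
      ≤ (∑ a, d x a) * V θs x := by
    intro x
    have hg := gibbs_scaled (fun a => d x a) (fun a => π₀ x a) (fun a => α * Q θs x a)
      (fun a => hd0 x a) (fun a => hπ₀pos x a)
    rw [hαV x] at hg
    have hL : ∑ a, (d x a * (α * Q θs x a)
        - d x a * Real.log ((d x a / ∑ a', d x a') / π₀ x a))
        = α * (∑ a, d x a * Q θs x a)
          - ∑ a, d x a * Real.log ((d x a / ∑ a', d x a') / π₀ x a) := by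
      simp only [Finset.sum_sub_distrib]
      congr 1
      rw [Finset.mul_sum]
      apply Finset.sum_congr rfl; intro a _
      ring
    rw [hL] at hg
    have h2 := mul_le_mul_of_nonneg_left hg (le_of_lt (by positivity : (0:ℝ) < 1 / α))
    calc (∑ a, d x a * Q θs x a)
        - (1 / α) * (∑ a, d x a * Real.log ((d x a / ∑ a', d x a') / π₀ x a))
        = (1 / α) * (α * (∑ a, d x a * Q θs x a)
            - ∑ a, d x a * Real.log ((d x a / ∑ a', d x a') / π₀ x a)) := by
          field_simp
      _ ≤ (1 / α) * ((∑ a, d x a) * (α * V θs x)) := h2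
      _ = (∑ a, d x a) * V θs x := by
          field_simp
  have hHd : Hc d d₀ = ∑ x, ∑ a, d x a *
      Real.log ((d x a / ∑ a', d x a') / π₀ x a) := by
    rw [hHc]
    apply Finset.sum_congr rfl; intro x _
    apply Finset.sum_congr rfl; intro a _
    rw [hπ₀]
  have hBsum : (∑ x, ∑ a, d x a * Q θs x a) - (1 / α) * Hc d d₀
      ≤ ∑ x, (∑ a, d x a) * V θs x := by
    rw [hHd, Finset.mul_sum, ← Finset.sum_sub_distrib]
    exact Finset.sum_le_sum fun x _ => hB x
  have hr_split : ∑ x, ∑ a, p x a * r x a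
      = (∑ x, ∑ a, p x a * Δ θs x a)
        - γ * (∑ x, ∑ a, p x a * (∑ x', P x a x' * V θs x'))
        + ∑ x, ∑ a, p x a * Q θs x a := by
    have h1 : ∀ x a, p x a * r x a = p x a * Δ θs x a
        - γ * (p x a * (∑ x', P x a x' * V θs x')) + p x a * Q θs x a := by
      intro x a
      rw [hΔ]
      ring
    simp only [h1, Finset.sum_add_distrib, Finset.sum_sub_distrib, ← Finset.mul_sum]
  have hflowV : ∑ x, (∑ a, d x a) * V θs x
      = γ * (∑ x', (∑ x, ∑ a, P x a x' * p x a) * V θs x')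
        + (1 - γ) * ∑ x, ν₀ x * V θs x := by
    calc ∑ x, (∑ a, d x a) * V θs x
        = ∑ x, (γ * ((∑ x', ∑ a', P x' a' x * p x' a') * V θs x)
            + (1 - γ) * (ν₀ x * V θs x)) := by
          apply Finset.sum_congr rfl; intro x _
          rw [hflow]
          ring
      _ = γ * (∑ x, (∑ x', ∑ a', P x' a' x * p x' a') * V θs x)
            + (1 - γ) * ∑ x, ν₀ x * V θs x := by
          rw [Finset.sum_add_distrib, ← Finset.mul_sum, ← Finset.mul_sum]
  have hQeq : ∑ x, ∑ a, p x a * Q θs x a = ∑ x, ∑ a, d x a * Q θs x a := by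
    rw [hQsum p, hQsum d]
    exact Finset.sum_congr rfl fun i _ => by rw [hfeat i]
  have hswpγ : γ * (∑ x, ∑ a, p x a * (∑ x', P x a x' * V θs x'))
      = γ * (∑ x', (∑ x, ∑ a, P x a x' * p x a) * V θs x') := by
    rw [hswap p (V θs)]
  rw [hJ, hG, ← hZdef, hr_split]
  linarith [hA, hBsum, hflowV, hQeq, hswpγ]
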